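/- Gallai's theorem: In any edge coloring of a complete graph on at least two vertices that contains no rainbow triangle, there exists a partition of the vertex set into at least two nonempty parts such that at most two colors in total appear on edges between distinct parts, and for each pair of distinct parts, all edges between those two parts receive the same single color. -/

import Mathlib

open SimpleGraph

/-- The edge coloring `c` of the complete graph on `V` contains a rainbow triangle. -/
def HasRainbowTriangle {V α : Type*} (c : Sym2 V → α) : Prop :=
  ∃ x y z : V, x ≠ y ∧ x ≠ z ∧ y ≠ z ∧
    c s(x, y) ≠ c s(x, z) ∧ c s(x, y) ≠ c s(y, z) ∧ c s(x, z) ≠ c s(y, z)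

/-- The edge coloring `c` contains a copy of `H` all of whose edges have color `i`. -/
def HasMonoCopyIn {V W α : Type*} (c : Sym2 V → α) (H : SimpleGraph W) (i : α) : Prop :=
  ∃ f : W ↪ V, ∀ u v, H.Adj u v → c s(f u, f v) = i

/-- The edge coloring `c` contains a monochromatic copy of `H`. -/
def HasMonoCopy {V W α : Type*} (c : Sym2 V → α) (H : SimpleGraph W) : Prop :=
  ∃ i, HasMonoCopyIn c H i

/-- Every `k`-coloring of the edges of `K_n` contains a rainbow triangle or a
monochromatic copy of `H`. -/
def grProp {W : Type*} (k : ℕ) (H : SimpleGraph W) (n : ℕ) : Prop :=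
  ∀ c : Sym2 (Fin n) → Fin k, HasRainbowTriangle c ∨ HasMonoCopy c H

/-- The `k`-color Gallai–Ramsey number `gr_k(K₃ : H)`: the minimum `N` such that for all
`n ≥ N`, every `k`-coloring of the edges of `K_n` contains a rainbow triangle or a
monochromatic copy of `H`. -/
noncomputable def gr {W : Type*} (k : ℕ) (H : SimpleGraph W) : ℕ :=
  sInf {N | ∀ n, N ≤ n → grProp k H n}

section Aux
variable {V α : Type*} (c : Sym2 V → α)

/-- The graph of edges whose color is neither `i` nor `j`. -/
def Gr (i j : α) : SimpleGraph V where
  Adj u w := u ≠ w ∧ c s(u, w) ≠ i ∧ c s(u, w) ≠ j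
  symm := by
    constructor
    intro u w ⟨h1, h2⟩
    refine ⟨h1.symm, ?_⟩
    rwa [Sym2.eq_swap]
  loopless := by constructor; intro u h; exact h.1 rfl

variable {c}

lemma nr_triple (hnr : ¬ HasRainbowTriangle c) {x y z : V}
    (hxy : x ≠ y) (hxz : x ≠ z) (hyz : y ≠ z) :
    c s(x, y) = c s(x, z) ∨ c s(x, y) = c s(y, z) ∨ c s(x, z) = c s(y, z) := by
  by_contra h
  push_neg at h
  exact hnr ⟨x, y, z, hxy, hxz, hyz, h.1, h.2.1, h.2.2⟩

lemma sep_not_connected {G : SimpleGraph V} {S : Set V} {x y : V}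
    (hx : x ∈ S) (hy : y ∉ S) (hsep : ∀ u ∈ S, ∀ w ∉ S, ¬ G.Adj u w) :
    ¬ G.Connected := by
  intro hc
  obtain ⟨w⟩ := hc.preconnected x y
  have key : ∀ a b : V, G.Walk a b → a ∈ S → b ∈ S := by
    intro a b p
    induction p with
    | nil => exact id
    | @cons u v b h p ih =>
      intro ha
      by_contra hb
      by_cases hv : v ∈ S
      · exact absurd (ih hv) hb
      · exact hsep u ha v hv h
  exact hy (key x y w hx)
end Aux

section Mono
variable {V α : Type*} {c : Sym2 V → α} {i j : α}

lemma not_adj_color (hne : u ≠ w) (h : ¬ (Gr c i j).Adj u w) :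
    c s(u, w) = i ∨ c s(u, w) = j := by
  by_contra hc
  push_neg at hc
  exact h ⟨hne, hc.1, hc.2⟩

lemma adj_step (hnr : ¬ HasRainbowTriangle c) {u v w : V}
    (hadj : (Gr c i j).Adj u v) (hw : ¬ (Gr c i j).Reachable u w) :
    c s(u, w) = c s(v, w) := by
  have huw : u ≠ w := fun h => hw (h ▸ Reachable.refl u)
  have hvw : v ≠ w := fun h => hw (h ▸ hadj.reachable)
  have h1 : c s(u, w) = i ∨ c s(u, w) = j :=
    not_adj_color huw (fun h => hw h.reachable)
  have h2 : c s(v, w) = i ∨ c s(v, w) = j := by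
    refine not_adj_color hvw (fun h => hw (hadj.reachable.trans h.reachable))
  have huv := hadj.2
  rcases nr_triple hnr hadj.1 huw hvw with h | h | h
  · exact absurd h1 (by rcases h1 with h1 | h1 <;> rw [← h] <;> simp [huv.1, huv.2])
  · exact absurd h2 (by rcases h2 with h2 | h2 <;> rw [← h] <;> simp [huv.1, huv.2])
  · exact h

lemma mono_left (hnr : ¬ HasRainbowTriangle c) {u u' w : V}
    (hr : (Gr c i j).Reachable u u') (hw : ¬ (Gr c i j).Reachable u w) :
    c s(u, w) = c s(u', w) := by
  obtain ⟨p⟩ := hr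
  induction p with
  | nil => rfl
  | @cons a b d h p ih =>
    have hbw : ¬ (Gr c i j).Reachable b w := fun hr => hw (h.reachable.trans hr)
    exact (adj_step hnr h hw).trans (ih hbw)

lemma mono_full (hnr : ¬ HasRainbowTriangle c) {u u' w w' : V}
    (hu : (Gr c i j).Reachable u u') (hww : (Gr c i j).Reachable w w')
    (hw : ¬ (Gr c i j).Reachable u w) :
    c s(u, w) = c s(u', w') := by
  have h1 : c s(u, w) = c s(u', w) := mono_left hnr hu hw
  have hw' : ¬ (Gr c i j).Reachable w u' := fun hr => hw ((hu.trans hr.symm).symm.symm)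
  have h2 : c s(w, u') = c s(w', u') := mono_left hnr hww hw'
  rw [h1, Sym2.eq_swap, h2, Sym2.eq_swap]
end Mono

universe u v

lemma exists_disconn {α : Type v} : ∀ (n : ℕ) (V : Type u) [Fintype V],
    Fintype.card V = n → 2 ≤ n → ∀ (c : Sym2 V → α), ¬ HasRainbowTriangle c →
    ∃ i j : α, ¬ (Gr c i j).Connected := by
  intro n
  induction n using Nat.strong_induction_on with
  | _ n ih =>
    intro V _ hcard hn c hnr
    classical
    rcases eq_or_lt_of_le hn with h2 | h3
    · -- base case : two vertices
      have hc2 : Nat.card V = 2 := by rw [Nat.card_eq_fintype_card, hcard, ← h2]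
      obtain ⟨x, y, hxy, huniv⟩ := Nat.card_eq_two_iff.mp hc2
      refine ⟨c s(x, y), c s(x, y), sep_not_connected (S := {x}) (y := y) rfl ?_ ?_⟩
      · simpa using hxy.symm
      · intro u hu w hw hadj
        have hu' : u = x := hu
        have hw' : w = y := by
          have := Set.mem_univ w
          rw [← huniv] at this
          rcases this with h | h
          · exact absurd (hu' ▸ h) hw
          · exact h
        exact hadj.2.1 (by rw [hu', hw'])
    · -- inductive step
      have hne : Nonempty V := Fintype.card_pos_iff.mp (by omega)
      obtain ⟨v⟩ := hne
      set W := {u : V // u ≠ v} with hW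
      have hcW : Fintype.card W = n - 1 := by
        have := Fintype.card_subtype_compl (fun u : V => u = v)
        simp only [Fintype.card_subtype_eq] at this
        simpa [hW, hcard] using this
      set c' : Sym2 W → α := fun e => c (Sym2.map Subtype.val e) with hc'
      have hc'p : ∀ a b : W, c' s(a, b) = c s(a.val, b.val) := by
        intro a b; simp [hc', Sym2.map_pair_eq]
      have hnr' : ¬ HasRainbowTriangle c' := by
        rintro ⟨x, y, z, h1, h2, h3, h4, h5, h6⟩
        simp only [hc'p] at h4 h5 h6
        exact hnr ⟨x.val, y.val, z.val, fun h => h1 (Subtype.ext h),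
          fun h => h2 (Subtype.ext h), fun h => h3 (Subtype.ext h), h4, h5, h6⟩
      obtain ⟨i, j, hG'⟩ := ih (n - 1) (by omega) W hcW (by omega) c' hnr'
      by_cases hGc : (Gr c i j).Connected
      swap
      · exact ⟨i, j, hGc⟩
      -- the hard case
      set G := Gr c i j with hG
      set G' := Gr c' i j with hGd
      have hadj' : ∀ a b : W, G'.Adj a b ↔ G.Adj a.val b.val := by
        intro a b
        constructor
        · rintro ⟨h1, h2⟩
          exact ⟨fun h => h1 (Subtype.ext h), by rwa [hc'p] at h2⟩
        · rintro ⟨h1, h2⟩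
          exact ⟨fun h => h1 (by rw [h]), by rwa [hc'p]⟩
      have hWne : Nonempty W := Fintype.card_pos_iff.mp (by omega)
      have hpre : ¬ G'.Preconnected := fun h => hG' ⟨h⟩
      rw [SimpleGraph.Preconnected] at hpre
      push_neg at hpre
      obtain ⟨x, y, hxy⟩ := hpre
      -- every component of G' contains a vertex whose edge to v avoids colors i, j
      have Ca : ∀ z : W, ∃ u : W, G'.Reachable z u ∧
          c s(v, u.val) ≠ i ∧ c s(v, u.val) ≠ j := by
        intro z
        by_contra hcon
        push_neg at hcon
        have hcon' : ∀ u : W, G'.Reachable z u →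
            c s(v, u.val) = i ∨ c s(v, u.val) = j := by
          intro u hr
          by_contra hc2
          push_neg at hc2
          exact hc2.2 (hcon u hr hc2.1)
        have hz : z.val ∈ {w : V | ∃ h : w ≠ v, G'.Reachable z ⟨w, h⟩} :=
          ⟨z.property, by exact Reachable.refl z⟩
        have hv : v ∉ {w : V | ∃ h : w ≠ v, G'.Reachable z ⟨w, h⟩} := by
          rintro ⟨h, -⟩; exact h rfl
        refine sep_not_connected hz hv ?_ hGc
        rintro u ⟨hu, hru⟩ w hw hadj
        by_cases hwv : w = v
        · rw [hwv] at hadj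
          have : c s(v, u) = i ∨ c s(v, u) = j := hcon' ⟨u, hu⟩ hru
          rw [Sym2.eq_swap] at this
          rcases this with h | h
          · exact hadj.2.1 h
          · exact hadj.2.2 h
        · exact hw ⟨hwv, hru.trans ((hadj' ⟨u, hu⟩ ⟨w, hwv⟩).mpr hadj).reachable⟩
      obtain ⟨a, hra, hka1, hka2⟩ := Ca x
      obtain ⟨b, hrb, hkb1, hkb2⟩ := Ca y
      have hab : ¬ G'.Reachable a b := fun h => hxy (hra.trans (h.trans hrb.symm))
      set k := c s(v, a.val) with hk
      -- helper : a color on an edge between two non-G'-reachable vertices of W is i or j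
      have cross_color : ∀ p q : W, ¬ G'.Reachable p q →
          c s(p.val, q.val) = i ∨ c s(p.val, q.val) = j := by
        intro p q hpq
        have hne : p.val ≠ q.val := by
          intro h
          exact hpq (by rw [Subtype.ext h])
        have : ¬ G'.Adj p q := fun h => hpq h.reachable
        have h2 := not_adj_color (c := c') (i := i) (j := j)
          (u := p) (w := q) (fun h => hpq (h ▸ Reachable.refl p)) this
        rwa [hc'p] at h2
      have hvals : ∀ u : W, v ≠ u.val := fun u h => u.property h.symm
      have hkb' : c s(v, b.val) = k := by
        have hcab := cross_color a b hab
        have hnab : a.val ≠ b.val := fun h => hab (by rw [Subtype.ext h])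
        rcases nr_triple hnr (hvals a) (hvals b) hnab with h | h | h
        · exact h.symm
        · rcases hcab with h' | h' <;> rw [h'] at h
          · exact absurd h hka1
          · exact absurd h hka2
        · rcases hcab with h' | h' <;> rw [h'] at h
          · exact absurd h hkb1
          · exact absurd h hkb2
      have hki : k ≠ i := hka1
      have hkj : k ≠ j := hka2
      -- every edge from v avoiding i and j has color k
      have hkAll : ∀ u : W, c s(v, u.val) ≠ i → c s(v, u.val) ≠ j →
          c s(v, u.val) = k := by
        intro u hui huj
        by_cases hau : G'.Reachable a u
        · have hbu : ¬ G'.Reachable b u := fun h => hab (hau.trans h.symm)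
          have hcbu := cross_color b u hbu
          have hnbu : b.val ≠ u.val := fun h => hbu (by rw [Subtype.ext h])
          rcases nr_triple hnr (hvals b) (hvals u) hnbu with h | h | h
          · rw [← h, hkb']
          · rcases hcbu with h' | h' <;> rw [h'] at h
            · exact absurd h (hkb' ▸ hki)
            · exact absurd h (hkb' ▸ hkj)
          · rcases hcbu with h' | h' <;> rw [h'] at h
            · exact absurd h hui
            · exact absurd h huj
        · have hcau := cross_color a u hau
          have hnau : a.val ≠ u.val := fun h => hau (by rw [Subtype.ext h])
          rcases nr_triple hnr (hvals a) (hvals u) hnau with h | h | h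
          · rw [← h]
          · rcases hcau with h' | h' <;> rw [h'] at h
            · exact absurd h hka1
            · exact absurd h hka2
          · rcases hcau with h' | h' <;> rw [h'] at h
            · exact absurd h hui
            · exact absurd h huj
      by_cases hD : ∀ u : W, c s(v, u.val) = k
      · -- all edges at v have color k : {v} is separated for the pair (k, k)
        obtain ⟨u0⟩ := hWne
        refine ⟨k, k, sep_not_connected (S := {v}) (y := u0.val) rfl
          (by simpa using (hvals u0).symm) ?_⟩
        rintro p hp w hw ⟨h1, h2, h3⟩
        rw [Set.mem_singleton_iff] at hp
        subst hp
        exact h2 (hD ⟨w, fun h => hw (by simp [h])⟩)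
      · push_neg at hD
        obtain ⟨w₀, hw₀⟩ := hD
        set ρ := c s(v, w₀.val) with hρ
        have hρij : ρ = i ∨ ρ = j := by
          by_contra hcρ
          push_neg at hcρ
          exact hw₀ (hkAll w₀ hcρ.1 hcρ.2)
        have hρk : ρ ≠ k := hw₀
        -- L1
        have L1 : ∀ w u : W, c s(v, w.val) ≠ k → c s(v, u.val) = k →
            ¬ G'.Reachable u w → c s(v, w.val) = c s(u.val, w.val) := by
          intro w u hwk huk hru
          have hcw : c s(v, w.val) = i ∨ c s(v, w.val) = j := by
            by_contra hcw
            push_neg at hcw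
            exact hwk (hkAll w hcw.1 hcw.2)
          have hcuw := cross_color u w hru
          have hnuw : u.val ≠ w.val := fun h => hru (by rw [Subtype.ext h])
          rcases nr_triple hnr (hvals u) (hvals w) hnuw with h | h | h
          · rw [huk] at h; exact absurd h.symm hwk
          · rw [huk] at h
            rcases hcuw with h' | h' <;> rw [h'] at h
            · exact absurd h hki
            · exact absurd h hkj
          · exact h
        -- Ci : all edges from v with color ≠ k have color ρ
        have Ci : ∀ w : W, c s(v, w.val) ≠ k → c s(v, w.val) = ρ := by
          intro w hwk
          by_cases hR : G'.Reachable w w₀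
          · -- pick u ∈ {a, b} not reachable from w
            obtain ⟨u, huk, hru⟩ : ∃ u : W, c s(v, u.val) = k ∧ ¬ G'.Reachable u w := by
              by_cases haw : G'.Reachable a w
              · exact ⟨b, hkb', fun h => hab (haw.trans h.symm)⟩
              · exact ⟨a, rfl, haw⟩
            have hru₀ : ¬ G'.Reachable u w₀ := fun h => hru (h.trans hR.symm)
            have e1 := L1 w u hwk huk hru
            have e2 := L1 w₀ u (fun h => hw₀ h) huk hru₀
            have e3 : c s(u.val, w.val) = c s(u.val, w₀.val) := by
              have hwu : ¬ G'.Reachable w u := fun h => hru h.symm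
              have := mono_left hnr' (u := w) (u' := w₀) (w := u) hR hwu
              rw [hc'p, hc'p] at this
              rw [Sym2.eq_swap, this, Sym2.eq_swap]
            rw [e1, e3, ← e2]
          · -- w and w₀ in different components
            obtain ⟨u₁, hru₁, hu₁i, hu₁j⟩ := Ca w
            obtain ⟨u₀, hru₀, hu₀i, hu₀j⟩ := Ca w₀
            have hu₁k := hkAll u₁ hu₁i hu₁j
            have hu₀k := hkAll u₀ hu₀i hu₀j
            have h₀w : ¬ G'.Reachable u₀ w := fun h => hR (h.symm.trans hru₀.symm).symm.symm
            have h₁w₀ : ¬ G'.Reachable u₁ w₀ := fun h => hR (hru₁.trans h)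
            have e1 := L1 w u₀ hwk hu₀k h₀w
            have e2 := L1 w₀ u₁ (fun h => hw₀ h) hu₁k h₁w₀
            have e3 : c s(u₀.val, w.val) = c s(u₁.val, w₀.val) := by
              have := mono_full hnr' (u := u₀) (u' := w₀) (w := w) (w' := u₁)
                hru₀.symm hru₁ h₀w
              rw [hc'p, hc'p] at this
              rw [this, Sym2.eq_swap]
            rw [e1, e3, ← e2]
        -- final separation : D = {v} ∪ k-neighbors of v, pair (ρ, k)
        refine ⟨ρ, k, sep_not_connected
          (S := {w | w = v ∨ c s(v, w) = k}) (y := w₀.val) (Or.inl rfl) ?_ ?_⟩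
        · rintro (h | h)
          · exact w₀.property h
          · exact hw₀ h
        · rintro p hp w hw ⟨h1, h2, h3⟩
          have hwv : w ≠ v := fun h => hw (Or.inl h)
          have hwk : c s(v, w) ≠ k := fun h => hw (Or.inr h)
          have hwρ : c s(v, w) = ρ := Ci ⟨w, hwv⟩ hwk
          by_cases hpv : p = v
          · rw [hpv] at h2
            exact h2 hwρ
          · have hp : c s(v, p) = k := hp.resolve_left hpv
            rcases nr_triple hnr (x := v) (y := p) (z := w)
              (fun h => hpv h.symm) (fun h => hwv h.symm) h1 with h | h | h
            · rw [hp, hwρ] at h; exact hρk h.symm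
            · rw [hp] at h; exact h3 h.symm
            · rw [hwρ] at h; exact h2 h.symm

theorem gallai_partition' {V α : Type*} [Fintype V] [DecidableEq V]
    (hcard : 2 ≤ Fintype.card V) (c : Sym2 V → α) (hnr : ¬ HasRainbowTriangle c) :
    ∃ P : Finpartition (Finset.univ : Finset V),
      2 ≤ P.parts.card ∧
      (∃ c₁ c₂ : α, ∀ p ∈ P.parts, ∀ q ∈ P.parts, p ≠ q →
        ∀ u ∈ p, ∀ v ∈ q, c s(u, v) = c₁ ∨ c s(u, v) = c₂) ∧
      (∀ p ∈ P.parts, ∀ q ∈ P.parts, p ≠ q →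
        ∃ i : α, ∀ u ∈ p, ∀ v ∈ q, c s(u, v) = i) := by
  classical
  obtain ⟨i, j, hnc⟩ := exists_disconn (Fintype.card V) V rfl hcard c hnr
  set G := Gr c i j with hG
  set sd : Setoid V := G.reachableSetoid with hsd
  have hr : ∀ a b : V, sd.r a b ↔ G.Reachable a b := fun a b => Iff.rfl
  set P := Finpartition.ofSetoid sd with hP
  -- membership facts
  have hmem : ∀ (p : Finset V), p ∈ P.parts → ∀ u ∈ p, ∀ w ∈ p, G.Reachable u w := by
    intro p hp u hu w hw
    have h1 : P.part u = p := P.part_eq_of_mem hp hu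
    have h2 : w ∈ P.part u := h1 ▸ hw
    exact (Finpartition.mem_part_ofSetoid_iff_rel).mp h2
  have hnotmem : ∀ (p q : Finset V), p ∈ P.parts → q ∈ P.parts → p ≠ q →
      ∀ u ∈ p, ∀ w ∈ q, ¬ G.Reachable u w := by
    intro p q hp hq hpq u hu w hw hreach
    have h1 : P.part u = p := P.part_eq_of_mem hp hu
    have h2 : w ∈ P.part u := (Finpartition.mem_part_ofSetoid_iff_rel).mpr hreach
    exact hpq (P.eq_of_mem_parts hp hq (h1 ▸ h2) hw)
  refine ⟨P, ?_, ?_, ?_⟩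
  · -- at least two parts
    have hnev : Nonempty V := Fintype.card_pos_iff.mp (by omega)
    have hprec : ¬ G.Preconnected := fun h => hnc ⟨h⟩
    rw [SimpleGraph.Preconnected] at hprec
    push_neg at hprec
    obtain ⟨x, y, hxy⟩ := hprec
    have hx := P.mem_part (a := x) (Finset.mem_univ x)
    have hy := P.mem_part (a := y) (Finset.mem_univ y)
    have hne : P.part x ≠ P.part y := by
      intro h
      exact hxy (hmem _ (P.part_mem.mpr (Finset.mem_univ x)) x hx y (h ▸ hy))
    exact Finset.one_lt_card.mpr ⟨P.part x, P.part_mem.mpr (Finset.mem_univ x), P.part y,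
      P.part_mem.mpr (Finset.mem_univ y), hne⟩
  · -- two colors across parts
    refine ⟨i, j, ?_⟩
    intro p hp q hq hpq u hu w hw
    have h := hnotmem p q hp hq hpq u hu w hw
    have hne : u ≠ w := fun h' => h (h' ▸ Reachable.refl u)
    exact not_adj_color hne (fun ha => h ha.reachable)
  · -- each pair of parts is monochromatic
    intro p hp q hq hpq
    obtain ⟨u₀, hu₀⟩ := P.nonempty_of_mem_parts hp
    obtain ⟨w₀, hw₀⟩ := P.nonempty_of_mem_parts hq
    refine ⟨c s(u₀, w₀), ?_⟩
    intro u hu w hw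
    have h1 : G.Reachable u u₀ := hmem p hp u hu u₀ hu₀
    have h2 : G.Reachable w w₀ := hmem q hq w hw w₀ hw₀
    have h3 : ¬ G.Reachable u w := hnotmem p q hp hq hpq u hu w hw
    exact mono_full hnr h1 h2 h3

theorem gallai_partition {V α : Type*} [Fintype V] [DecidableEq V]
    (hcard : 2 ≤ Fintype.card V) (c : Sym2 V → α) (hnr : ¬ HasRainbowTriangle c) :
    ∃ P : Finpartition (Finset.univ : Finset V),
      2 ≤ P.parts.card ∧
      (∃ c₁ c₂ : α, ∀ p ∈ P.parts, ∀ q ∈ P.parts, p ≠ q →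
        ∀ u ∈ p, ∀ v ∈ q, c s(u, v) = c₁ ∨ c s(u, v) = c₂) ∧
      (∀ p ∈ P.parts, ∀ q ∈ P.parts, p ≠ q →
        ∃ i : α, ∀ u ∈ p, ∀ v ∈ q, c s(u, v) = i) := by
  exact gallai_partition' hcard c hnr
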